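/- Define the sequence Aₗ by A₁ = -1, A₂ = σh - 2, and A_{L+2} + (σh - 2)A_{L+1} + A_L = 0, treated as polynomials in the variable σh. Then Aₗ(σh) is a polynomial of degree at most L-1 in σh, and its roots are exactly (σh)ⱼ^L = 2 + 2cos(jπ/L) for j = 1, 2, ..., L-1, which are L-1 distinct positive numbers. -/

import Mathlib

open Polynomial Real

/-- The polynomials `A_L` defined by `A₁ = -1`, `A₂ = t - 2` and
`A_{L+2} + (t-2)A_{L+1} + A_L = 0` have degree at most `L-1`, and the roots of
`A_L` are exactly the `L-1` distinct positive numbers `2 + 2cos(jπ/L)`,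
`j = 1, …, L-1`. -/
theorem chebyshev_recurrence_roots (A : ℕ → Polynomial ℝ)
    (h1 : A 1 = Polynomial.C (-1))
    (h2 : A 2 = Polynomial.X - Polynomial.C 2)
    (hrec : ∀ L : ℕ, 1 ≤ L →
      A (L + 2) = -(Polynomial.X - Polynomial.C 2) * A (L + 1) - A L) :
    ∀ L : ℕ, 1 ≤ L →
      (A L).natDegree ≤ L - 1 ∧
      (∀ t : ℝ, (A L).eval t = 0 ↔
        ∃ j : ℕ, 1 ≤ j ∧ j ≤ L - 1 ∧ t = 2 + 2 * Real.cos (j * Real.pi / L)) ∧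
      (∀ j : ℕ, 1 ≤ j → j ≤ L - 1 → 0 < 2 + 2 * Real.cos (j * Real.pi / L)) ∧
      (∀ j j' : ℕ, 1 ≤ j → j ≤ L - 1 → 1 ≤ j' → j' ≤ L - 1 →
        2 + 2 * Real.cos (j * Real.pi / L) = 2 + 2 * Real.cos (j' * Real.pi / L) →
        j = j') := by
  -- degree bound by two-step induction
  have hdeg : ∀ L : ℕ, (A (L+1)).natDegree ≤ L ∧ (A (L+2)).natDegree ≤ L+1 := by
    intro L
    induction L with
    | zero =>
      constructor
      · simp [h1]
      · rw [h2]
        exact (natDegree_sub_le _ _).trans (by simp)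
    | succ n ih =>
      refine ⟨ih.2, ?_⟩
      rw [show n+1+2 = (n+1)+2 from rfl, hrec (n+1) (by omega)]
      refine (natDegree_sub_le _ _).trans (max_le ?_ ?_)
      · calc natDegree (-(X - C 2) * A (n+2))
            ≤ natDegree (-(X - C (2:ℝ))) + natDegree (A (n+2)) := natDegree_mul_le
          _ ≤ 1 + (n+1) := by
              refine add_le_add ?_ ih.2
              rw [natDegree_neg]
              exact (natDegree_sub_le _ _).trans (by simp)
          _ = n + 1 + 1 := by ring
      · exact ih.1.trans (by omega)
  -- key trigonometric identity
  have hid : ∀ L : ℕ,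
      (∀ θ : ℝ, (A (L+1)).eval (2 + 2 * Real.cos θ) * Real.sin θ
        = (-1)^(L+1) * Real.sin ((L+1 : ℕ) * θ)) ∧
      (∀ θ : ℝ, (A (L+2)).eval (2 + 2 * Real.cos θ) * Real.sin θ
        = (-1)^(L+2) * Real.sin ((L+2 : ℕ) * θ)) := by
    intro L
    induction L with
    | zero =>
      constructor
      · intro θ; simp [h1]
      · intro θ
        rw [h2]
        push_cast
        simp only [eval_sub, eval_X, eval_C]
        rw [show (2:ℝ) * θ = θ + θ by ring, Real.sin_add]
        ring
    | succ n ih =>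
      refine ⟨ih.2, fun θ => ?_⟩
      rw [show n+1+2 = (n+1)+2 from rfl, hrec (n+1) (by omega)]
      have e1 := ih.1 θ
      have e2 := ih.2 θ
      have ha : ((n+3 : ℕ) : ℝ) * θ = ((n+2 : ℕ) : ℝ) * θ + θ := by push_cast; ring
      have hb : ((n+1 : ℕ) : ℝ) * θ = ((n+2 : ℕ) : ℝ) * θ - θ := by push_cast; ring
      simp only [eval_sub, eval_mul, eval_neg, eval_X, eval_C]
      rw [show ((n+1)+2 : ℕ) = (n+3 : ℕ) from rfl] at *
      rw [ha, Real.sin_add]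
      rw [hb, Real.sin_sub] at e1
      have hA2 : A (n + 1 + 1) = A (n + 2) := rfl
      rw [hA2]
      linear_combination (-(2 * Real.cos θ)) * e2 - e1
  intro L hL
  obtain ⟨L', rfl⟩ : ∃ L', L = L' + 1 := ⟨L-1, by omega⟩
  have hident := (hid L').1
  have hLpos : (0:ℝ) < (L' + 1 : ℕ) := by positivity
  -- the candidate roots are in (0, π) scaled
  have hθmem : ∀ j : ℕ, 1 ≤ j → j ≤ L' →
      0 < (j : ℝ) * π / (L' + 1 : ℕ) ∧ (j : ℝ) * π / (L' + 1 : ℕ) < π := by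
    intro j hj1 hj2
    have hj1' : (1:ℝ) ≤ j := by exact_mod_cast hj1
    have hj2' : (j:ℝ) < (L' + 1 : ℕ) := by exact_mod_cast Nat.lt_succ_of_le hj2
    constructor
    · positivity
    · rw [div_lt_iff₀ hLpos]
      nlinarith [Real.pi_pos]
  -- positivity of candidate roots
  have hpos : ∀ j : ℕ, 1 ≤ j → j ≤ L' → 0 < 2 + 2 * Real.cos ((j : ℝ) * π / (L' + 1 : ℕ)) := by
    intro j hj1 hj2
    obtain ⟨h0, hπ⟩ := hθmem j hj1 hj2
    have := Real.strictAntiOn_cos ⟨le_of_lt h0, le_of_lt hπ⟩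
      ⟨Real.pi_pos.le, le_refl π⟩ hπ
    rw [Real.cos_pi] at this
    linarith
  -- injectivity of j ↦ 2 + 2cos(jπ/(L'+1)) on [1, L']
  have hinj : ∀ j j' : ℕ, 1 ≤ j → j ≤ L' → 1 ≤ j' → j' ≤ L' →
      2 + 2 * Real.cos ((j:ℝ) * π / (L' + 1 : ℕ)) = 2 + 2 * Real.cos ((j':ℝ) * π / (L' + 1 : ℕ)) →
      j = j' := by
    intro j j' hj1 hj2 hj1' hj2' heq
    obtain ⟨h0, hπ⟩ := hθmem j hj1 hj2
    obtain ⟨h0', hπ'⟩ := hθmem j' hj1' hj2'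
    have hcos : Real.cos ((j:ℝ) * π / (L' + 1 : ℕ)) = Real.cos ((j':ℝ) * π / (L' + 1 : ℕ)) := by
      linarith
    have := Real.injOn_cos ⟨h0.le, hπ.le⟩ ⟨h0'.le, hπ'.le⟩ hcos
    have hπ0 := Real.pi_ne_zero
    have hL0 : ((L' + 1 : ℕ) : ℝ) ≠ 0 := ne_of_gt hLpos
    field_simp at this
    exact_mod_cast this
  -- A (L'+1) is nonzero
  have hAne : A (L'+1) ≠ 0 := by
    intro h
    have hval := hident (π / (2 * (L' + 1 : ℕ)))
    rw [h] at hval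
    simp only [eval_zero, zero_mul] at hval
    have harg : ((L'+1 : ℕ) : ℝ) * (π / (2 * (L' + 1 : ℕ))) = π / 2 := by
      field_simp
    rw [harg, Real.sin_pi_div_two, mul_one] at hval
    have : ((-1:ℝ))^(L'+1) ≠ 0 := by positivity
    exact this hval.symm
  -- each candidate is a root
  have hroot : ∀ j : ℕ, 1 ≤ j → j ≤ L' →
      (A (L'+1)).eval (2 + 2 * Real.cos ((j:ℝ) * π / (L' + 1 : ℕ))) = 0 := by
    intro j hj1 hj2
    obtain ⟨h0, hπ⟩ := hθmem j hj1 hj2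
    have hv := hident ((j:ℝ) * π / (L' + 1 : ℕ))
    have harg : ((L'+1 : ℕ) : ℝ) * ((j:ℝ) * π / (L' + 1 : ℕ)) = (j:ℝ) * π := by
      field_simp
    rw [harg, Real.sin_nat_mul_pi, mul_zero] at hv
    have hsin : Real.sin ((j:ℝ) * π / (L' + 1 : ℕ)) ≠ 0 :=
      ne_of_gt (Real.sin_pos_of_pos_of_lt_pi h0 hπ)
    exact (mul_eq_zero.1 hv).resolve_right hsin
  -- counting roots
  set S : Finset ℝ :=
    (Finset.Icc 1 L').image (fun j : ℕ => 2 + 2 * Real.cos ((j:ℝ) * π / (L' + 1 : ℕ))) with hS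
  have hScard : S.card = L' := by
    rw [hS, Finset.card_image_of_injOn, Nat.card_Icc]
    · omega
    · intro a ha b hb hab
      simp only [Finset.coe_Icc, Set.mem_Icc] at ha hb
      exact hinj a b ha.1 ha.2 hb.1 hb.2 hab
  have hsub : S ⊆ (A (L'+1)).roots.toFinset := by
    intro t ht
    rw [hS, Finset.mem_image] at ht
    obtain ⟨j, hj, rfl⟩ := ht
    rw [Finset.mem_Icc] at hj
    rw [Multiset.mem_toFinset, mem_roots hAne]
    exact hroot j hj.1 hj.2
  have hcard2 : (A (L'+1)).roots.toFinset.card ≤ L' :=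
    (Multiset.toFinset_card_le _).trans ((Polynomial.card_roots' _).trans (hdeg L').1)
  have hSeq : S = (A (L'+1)).roots.toFinset :=
    Finset.eq_of_subset_of_card_le hsub (by rw [hScard]; exact hcard2)
  refine ⟨by simpa using (hdeg L').1, ?_, ?_, ?_⟩
  · intro t
    constructor
    · intro ht
      have : t ∈ S := by
        rw [hSeq, Multiset.mem_toFinset, mem_roots hAne]
        exact ht
      rw [hS, Finset.mem_image] at this
      obtain ⟨j, hj, hjt⟩ := this
      rw [Finset.mem_Icc] at hj
      exact ⟨j, hj.1, by simpa using hj.2, hjt.symm⟩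
    · rintro ⟨j, hj1, hj2, rfl⟩
      exact hroot j hj1 (by simpa using hj2)
  · intro j hj1 hj2
    exact hpos j hj1 (by simpa using hj2)
  · intro j j' hj1 hj2 hj1' hj2'
    exact hinj j j' hj1 (by simpa using hj2) hj1' (by simpa using hj2')
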